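/- arXiv:2310.07262 — 4 statements merged into one kernel-verified Lean document; each statement's English description precedes it below -/
import Mathlib

section
/- Let Σ_w be a real symmetric positive definite n×n matrix. For any real symmetric positive definite matrix Σ and any real skew-symmetric matrix S, the matrix A = (-(1/2)Σ_w + S)Σ⁻¹ is Hurwitz stable (all eigenvalues have strictly negative real part). -/
open Matrix Polynomial

/-- Real part of the complex quadratic form of a real matrix. -/
lemma quad_re_aux {n : ℕ} (M : Matrix (Fin n) (Fin n) ℝ) (u : Fin n → ℂ) :
    (star u ⬝ᵥ (M.map Complex.ofReal *ᵥ u)).re =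
      (fun i => (u i).re) ⬝ᵥ (M *ᵥ fun i => (u i).re) +
      (fun i => (u i).im) ⬝ᵥ (M *ᵥ fun i => (u i).im) := by
  simp only [dotProduct, mulVec, map_apply, Pi.star_apply,
    Finset.mul_sum, Complex.re_sum]
  rw [← Finset.sum_add_distrib]
  refine Finset.sum_congr rfl fun i _ => ?_
  rw [← Finset.sum_add_distrib]
  refine Finset.sum_congr rfl fun j _ => ?_
  simp [Complex.mul_re, Complex.ofReal_re, Complex.ofReal_im]

/-- Imaginary part of the complex quadratic form of a real matrix. -/
lemma quad_im_aux {n : ℕ} (M : Matrix (Fin n) (Fin n) ℝ) (u : Fin n → ℂ) :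
    (star u ⬝ᵥ (M.map Complex.ofReal *ᵥ u)).im =
      (fun i => (u i).re) ⬝ᵥ (M *ᵥ fun i => (u i).im) -
      (fun i => (u i).im) ⬝ᵥ (M *ᵥ fun i => (u i).re) := by
  simp only [dotProduct, mulVec, map_apply, Pi.star_apply,
    Finset.mul_sum, Complex.im_sum]
  rw [← Finset.sum_sub_distrib]
  refine Finset.sum_congr rfl fun i _ => ?_
  rw [← Finset.sum_sub_distrib]
  refine Finset.sum_congr rfl fun j _ => ?_
  simp [Complex.mul_im, Complex.ofReal_re, Complex.ofReal_im]
  ring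

lemma real_posdef_dot {n : ℕ} {M : Matrix (Fin n) (Fin n) ℝ} (hM : M.PosDef)
    {x : Fin n → ℝ} (hx : x ≠ 0) : 0 < x ⬝ᵥ (M *ᵥ x) := by
  have := hM.dotProduct_mulVec_pos hx
  simpa using this

lemma real_posdef_dot_nonneg {n : ℕ} {M : Matrix (Fin n) (Fin n) ℝ} (hM : M.PosDef)
    (x : Fin n → ℝ) : 0 ≤ x ⬝ᵥ (M *ᵥ x) := by
  have := hM.posSemidef.dotProduct_mulVec_nonneg x
  simpa using this

lemma quad_pos_aux {n : ℕ} {M : Matrix (Fin n) (Fin n) ℝ} (hM : M.PosDef)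
    {u : Fin n → ℂ} (hu : u ≠ 0) :
    0 < (star u ⬝ᵥ (M.map Complex.ofReal *ᵥ u)).re := by
  rw [quad_re_aux]
  set x : Fin n → ℝ := fun i => (u i).re with hxdef
  set y : Fin n → ℝ := fun i => (u i).im with hydef
  have hxy : x ≠ 0 ∨ y ≠ 0 := by
    by_contra h
    push_neg at h
    apply hu
    funext i
    have hx := congrFun h.1 i
    have hy := congrFun h.2 i
    simp only [hxdef, hydef, Pi.zero_apply] at hx hy
    exact Complex.ext hx hy
  have hx0 := real_posdef_dot_nonneg hM x
  have hy0 := real_posdef_dot_nonneg hM y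
  rcases hxy with hx | hy
  · have := real_posdef_dot hM hx
    linarith
  · have := real_posdef_dot hM hy
    linarith

lemma skew_dot_aux {n : ℕ} {M : Matrix (Fin n) (Fin n) ℝ} (hM : Mᵀ = -M)
    (v : Fin n → ℝ) : v ⬝ᵥ (M *ᵥ v) = 0 := by
  have h : v ⬝ᵥ (M *ᵥ v) = -(v ⬝ᵥ (M *ᵥ v)) := by
    conv_lhs => rw [dotProduct_mulVec, ← mulVec_transpose, hM, neg_mulVec,
      neg_dotProduct, dotProduct_comm]
  linarith

lemma sym_dot_aux {n : ℕ} {M : Matrix (Fin n) (Fin n) ℝ} (hM : Mᵀ = M)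
    (x y : Fin n → ℝ) : x ⬝ᵥ (M *ᵥ y) = y ⬝ᵥ (M *ᵥ x) := by
  conv_lhs => rw [dotProduct_mulVec, ← mulVec_transpose, hM, dotProduct_comm]

lemma spectrum_eigvec {n : ℕ} (M : Matrix (Fin n) (Fin n) ℂ) (μ : ℂ)
    (hμ : μ ∈ spectrum ℂ M) : ∃ v ≠ 0, M *ᵥ v = μ • v := by
  rw [spectrum.mem_iff] at hμ
  have hdet : (algebraMap ℂ (Matrix (Fin n) (Fin n) ℂ) μ - M).det = 0 := by
    by_contra hd
    exact hμ ((Matrix.isUnit_iff_isUnit_det _).2 (isUnit_iff_ne_zero.2 hd))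
  obtain ⟨v, hv, hv0⟩ := (Matrix.exists_mulVec_eq_zero_iff).2 hdet
  refine ⟨v, hv, ?_⟩
  rw [sub_mulVec, sub_eq_zero, algebraMap_eq_diagonal] at hv0
  rw [hv0.symm]; funext i
  simp [mulVec_diagonal, Pi.algebraMap_apply, Algebra.algebraMap_self_apply]

/-- A real matrix is Hurwitz stable if all its (complex) eigenvalues have
strictly negative real part. -/
def IsHurwitz {n : ℕ} (A : Matrix (Fin n) (Fin n) ℝ) : Prop :=
  ∀ μ ∈ spectrum ℂ (A.map (Complex.ofReal)), μ.re < 0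

theorem stmt0 {n : ℕ} (Sw Sig S : Matrix (Fin n) (Fin n) ℝ)
    (hSw : Sw.PosDef) (hSig : Sig.PosDef) (hS : Sᵀ = -S) :
    IsHurwitz (((-(1/2 : ℝ)) • Sw + S) * Sig⁻¹) := by
  intro μ hμ
  set A : Matrix (Fin n) (Fin n) ℝ := (-(1/2 : ℝ)) • Sw + S with hA
  obtain ⟨v, hv, hv0⟩ := spectrum_eigvec _ μ hμ
  -- split the map of a product
  have hmap : (A * Sig⁻¹).map Complex.ofReal
      = A.map Complex.ofReal * (Sig⁻¹).map Complex.ofReal := by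
    exact Matrix.map_mul (f := Complex.ofRealHom)
  -- Sig is invertible
  have hSigUnit : IsUnit Sig.det := (isUnit_iff_ne_zero).2 (ne_of_gt hSig.det_pos)
  have hinv : Sig.map Complex.ofReal * (Sig⁻¹).map Complex.ofReal = 1 := by
    have h2 : (Sig * Sig⁻¹).map Complex.ofReal
        = Sig.map Complex.ofReal * (Sig⁻¹).map Complex.ofReal :=
      Matrix.map_mul (f := Complex.ofRealHom)
    rw [← h2, Matrix.mul_nonsing_inv _ hSigUnit]
    exact Matrix.map_one _ Complex.ofReal_zero Complex.ofReal_one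
  set u : Fin n → ℂ := (Sig⁻¹).map Complex.ofReal *ᵥ v with hu
  have hvu : Sig.map Complex.ofReal *ᵥ u = v := by
    rw [hu, mulVec_mulVec, hinv, one_mulVec]
  have hune : u ≠ 0 := by
    intro h
    apply hv
    rw [← hvu, h, mulVec_zero]
  have heig : A.map Complex.ofReal *ᵥ u = μ • (Sig.map Complex.ofReal *ᵥ u) := by
    rw [hvu, ← hv0, hmap, ← mulVec_mulVec, hu]
  -- take quadratic forms
  have hquad : star u ⬝ᵥ (A.map Complex.ofReal *ᵥ u)
      = μ * (star u ⬝ᵥ (Sig.map Complex.ofReal *ᵥ u)) := by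
    rw [heig, dotProduct_smul, smul_eq_mul]
  set b := star u ⬝ᵥ (A.map Complex.ofReal *ᵥ u) with hb
  set c := star u ⬝ᵥ (Sig.map Complex.ofReal *ᵥ u) with hc
  have hcre : 0 < c.re := quad_pos_aux hSig hune
  have hcim : c.im = 0 := by
    have hsymm : Sigᵀ = Sig := by
      exact isHermitian_iff_isSymm.mp hSig.1
    rw [hc, quad_im_aux, sym_dot_aux hsymm, sub_self]
  -- compute b.re
  set x : Fin n → ℝ := fun i => (u i).re with hx
  set y : Fin n → ℝ := fun i => (u i).im with hy
  have hbre : b.re = (-(1/2 : ℝ)) * (x ⬝ᵥ (Sw *ᵥ x) + y ⬝ᵥ (Sw *ᵥ y)) := by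
    rw [hb, quad_re_aux, hA]
    simp only [add_mulVec, smul_mulVec, dotProduct_add, dotProduct_smul,
      smul_eq_mul, skew_dot_aux hS]
    ring
  have hSwpos : 0 < x ⬝ᵥ (Sw *ᵥ x) + y ⬝ᵥ (Sw *ᵥ y) := by
    have := quad_pos_aux hSw hune
    rwa [quad_re_aux] at this
  have hbneg : b.re < 0 := by
    rw [hbre]; nlinarith
  have hmul : b.re = μ.re * c.re := by
    rw [hquad, Complex.mul_re, hcim, mul_zero, sub_zero]
  nlinarith [hcre, hbneg, hmul]
end

section
/- Fix a symmetric positive definite matrix Σ_w. The map f(Σ, S) = (-(1/2)Σ_w + S)Σ⁻¹ from the set of pairs (symmetric positive definite Σ, skew-symmetric S) to the set of Hurwitz stable n×n real matrices is a bijection. -/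
open Matrix Polynomial
variable {n : ℕ}

-- spectrum via determinant
lemma mem_spectrum_iff_det {K : Type*} [Field K] (M : Matrix (Fin n) (Fin n) K) (μ : K) :
    μ ∈ spectrum K M ↔ (μ • (1 : Matrix (Fin n) (Fin n) K) - M).det = 0 := by
  rw [spectrum.mem_iff, Algebra.algebraMap_eq_smul_one, Matrix.isUnit_iff_isUnit_det,
    isUnit_iff_ne_zero, not_ne_iff]

lemma eval_charpoly {K : Type*} [Field K] (M : Matrix (Fin n) (Fin n) K) (μ : K) :
    M.charpoly.eval μ = (μ • (1 : Matrix (Fin n) (Fin n) K) - M).det := by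
  rw [Matrix.charpoly]
  have : (Polynomial.evalRingHom μ) (M.charmatrix.det)
      = ((M.charmatrix).map (Polynomial.evalRingHom μ)).det := RingHom.map_det _ _
  simp only [coe_evalRingHom] at this
  rw [this]
  congr 1
  ext i j
  by_cases h : i = j
  · subst h; simp [charmatrix_apply_eq, Matrix.smul_apply, Matrix.one_apply]
  · simp [charmatrix_apply_ne _ _ _ h, Matrix.smul_apply, Matrix.one_apply, h]

lemma mem_spectrum_iff_root {K : Type*} [Field K] (M : Matrix (Fin n) (Fin n) K) (μ : K) :
    μ ∈ spectrum K M ↔ M.charpoly.IsRoot μ := by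
  rw [mem_spectrum_iff_det, IsRoot, _root_.eval_charpoly]

lemma spectrum_transpose {K : Type*} [Field K] (M : Matrix (Fin n) (Fin n) K) :
    spectrum K Mᵀ = spectrum K M := by
  ext μ
  rw [mem_spectrum_iff_det, mem_spectrum_iff_det]
  constructor <;> intro h
  · rw [← Matrix.det_transpose]; simpa [Matrix.transpose_sub, Matrix.transpose_smul] using h
  · rw [← Matrix.det_transpose] at h; simpa [Matrix.transpose_sub, Matrix.transpose_smul] using h

variable {n : ℕ}

section Sylvester
attribute [local instance] Matrix.linftyOpNormedRing Matrix.linftyOpNormedAlgebra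
  Matrix.linftyOpNormedAddCommGroup

-- intertwining: if A * X = X * B then p(A) * X = X * p(B)
lemma aeval_comm {R : Type*} [CommRing R] {A B X : Matrix (Fin n) (Fin n) R}
    (h : A * X = X * B) (p : R[X]) : (aeval A p) * X = X * (aeval B p) := by
  have hpow : ∀ m : ℕ, A ^ m * X = X * B ^ m := by
    intro m
    induction m with
    | zero => simp
    | succ m ihm => rw [pow_succ, pow_succ, mul_assoc, h, ← mul_assoc, ihm, mul_assoc]
  induction p using Polynomial.induction_on with
  | C a => simp [Algebra.algebraMap_eq_smul_one, smul_mul_assoc, mul_smul_comm]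
  | add p q hp hq => simp [map_add, add_mul, mul_add, hp, hq]
  | monomial k a ih =>
    simp only [_root_.map_mul, aeval_C, map_pow, aeval_X]
    rw [mul_assoc, hpow (k+1), Algebra.algebraMap_eq_smul_one, smul_mul_assoc, one_mul,
      smul_mul_assoc, one_mul, mul_smul_comm]

lemma sylvester_inj {A B X : Matrix (Fin n) (Fin n) ℂ}
    (hspec : ∀ μ ∈ spectrum ℂ A, ∀ ν ∈ spectrum ℂ B, μ + ν ≠ 0)
    (hX : A * X + X * B = 0) : X = 0 := by
  rcases Nat.eq_zero_or_pos n with hn | hn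
  · subst hn; ext i j; exact absurd i.2 (by omega)
  haveI : Nonempty (Fin n) := ⟨⟨0, hn⟩⟩
  have hAB : A * X = X * (-B) := by
    rw [Matrix.mul_neg, ← sub_eq_zero, sub_neg_eq_add, hX]
  have key := aeval_comm hAB A.charpoly
  rw [Matrix.aeval_self_charpoly, zero_mul] at key
  have hunit : IsUnit (aeval (-B) A.charpoly) := by
    by_contra hnu
    have h0 : (0 : ℂ) ∈ spectrum ℂ (aeval (-B) A.charpoly) := by
      rw [spectrum.mem_iff]
      simpa using hnu
    rw [spectrum.map_polynomial_aeval] at h0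
    obtain ⟨ν, hν, hroot⟩ := h0
    have hν' : ν ∈ spectrum ℂ A := by
      rw [mem_spectrum_iff_root]
      exact hroot
    have hmν : -ν ∈ spectrum ℂ B := by
      rw [mem_spectrum_iff_det] at hν ⊢
      have : (-ν) • (1 : Matrix (Fin n) (Fin n) ℂ) - B = -(ν • 1 - -B) := by
        ext i j; simp [Matrix.smul_apply, Matrix.one_apply]; ring
      rw [this, Matrix.det_neg, hν, mul_zero]
    exact hspec ν hν' (-ν) hmν (by ring)
  obtain ⟨u, hu⟩ := hunit
  calc X = X * (aeval (-B) A.charpoly) * (↑u⁻¹ : Matrix (Fin n) (Fin n) ℂ) := by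
        rw [← hu, mul_assoc, ← Units.val_mul, mul_inv_cancel, Units.val_one, mul_one]
      _ = 0 := by rw [← key, zero_mul]

variable {n : ℕ}

end Sylvester

namespace LyapAux

noncomputable def mapC (M : Matrix (Fin n) (Fin n) ℝ) : Matrix (Fin n) (Fin n) ℂ :=
  M.map Complex.ofReal

lemma mapC_mul (M N : Matrix (Fin n) (Fin n) ℝ) : mapC (M * N) = mapC M * mapC N := by
  ext i j
  simp [mapC, Matrix.mul_apply]

lemma mapC_add (M N : Matrix (Fin n) (Fin n) ℝ) : mapC (M + N) = mapC M + mapC N := by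
  ext i j; simp [mapC]

lemma mapC_transpose (M : Matrix (Fin n) (Fin n) ℝ) : mapC Mᵀ = (mapC M)ᵀ := by
  ext i j; simp [mapC]

lemma mapC_smul_one (c : ℝ) : mapC (c • (1 : Matrix (Fin n) (Fin n) ℝ))
    = (c : ℂ) • (1 : Matrix (Fin n) (Fin n) ℂ) := by
  ext i j; simp [mapC, Matrix.smul_apply, Matrix.one_apply, apply_ite]; split <;> simp_all

lemma mapC_sub (M N : Matrix (Fin n) (Fin n) ℝ) : mapC (M - N) = mapC M - mapC N := by
  ext i j; simp [mapC]

lemma mapC_inj {M N : Matrix (Fin n) (Fin n) ℝ} (h : mapC M = mapC N) : M = N := by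
  ext i j
  have := congrFun (congrFun h i) j
  simpa [mapC] using this

lemma spectrum_sub_smul_one {K : Type*} [Field K] (M : Matrix (Fin n) (Fin n) K) (c μ : K) :
    μ ∈ spectrum K (M - c • 1) ↔ μ + c ∈ spectrum K M := by
  rw [mem_spectrum_iff_det, mem_spectrum_iff_det]
  have : μ • (1 : Matrix (Fin n) (Fin n) K) - (M - c • 1) = (μ + c) • 1 - M := by
    ext i j; simp [Matrix.smul_apply, Matrix.one_apply]; split <;> ring
  rw [this]

/-- Injectivity of the (shifted) Lyapunov operator for Hurwitz matrices. -/
lemma lyap_injective {A : Matrix (Fin n) (Fin n) ℝ} (hA : IsHurwitz A) {c : ℝ} (hc : 0 ≤ c)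
    {X : Matrix (Fin n) (Fin n) ℝ} (hX : A * X + X * Aᵀ - (2 * c) • X = 0) : X = 0 := by
  set B : Matrix (Fin n) (Fin n) ℝ := A - c • 1 with hB
  have hBX : B * X + X * Bᵀ = 0 := by
    rw [hB]
    have : (A - c • 1) * X + X * (A - c • 1)ᵀ = A * X + X * Aᵀ - (2 * c) • X := by
      rw [Matrix.transpose_sub, Matrix.transpose_smul, Matrix.transpose_one]
      rw [Matrix.sub_mul, Matrix.mul_sub]
      rw [Matrix.smul_mul, Matrix.mul_smul, Matrix.one_mul, Matrix.mul_one]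
      module
    rw [this, hX]
  have hspecB : ∀ μ ∈ spectrum ℂ (mapC B), μ.re < 0 := by
    intro μ hμ
    have : mapC B = mapC A - (c : ℂ) • 1 := by rw [hB, mapC_sub, mapC_smul_one]
    rw [this, spectrum_sub_smul_one] at hμ
    have := hA _ hμ
    simp only [Complex.add_re, Complex.ofReal_re] at this
    linarith
  have hC : mapC B * mapC X + mapC X * (mapC B)ᵀ = 0 := by
    rw [← mapC_transpose, ← mapC_mul, ← mapC_mul, ← mapC_add, hBX]
    ext i j; simp [mapC]
  have : mapC X = 0 := by
    apply sylvester_inj (A := mapC B) (B := (mapC B)ᵀ) ?_ hC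
    intro μ hμ ν hν
    rw [spectrum_transpose] at hν
    have h1 := hspecB μ hμ
    have h2 := hspecB ν hν
    intro h
    have : (μ + ν).re = 0 := by rw [h]; simp
    simp only [Complex.add_re] at this
    linarith
  apply mapC_inj
  rw [this]; ext i j; simp [mapC]

open scoped ComplexOrder

variable {n : ℕ}

lemma expand_quad (M : Matrix (Fin n) (Fin n) ℝ) (u v : Fin n → ℝ) :
    u ⬝ᵥ M *ᵥ v = ∑ i, ∑ j, M i j * u i * v j := by
  simp only [dotProduct, mulVec]
  refine Finset.sum_congr rfl fun i _ => ?_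
  rw [Finset.mul_sum]
  exact Finset.sum_congr rfl fun j _ => by ring

lemma expand_quadC (M : Matrix (Fin n) (Fin n) ℝ) (x : Fin n → ℂ) :
    star x ⬝ᵥ (mapC M) *ᵥ x = ∑ i, ∑ j, (M i j : ℂ) * (starRingEnd ℂ (x i) * x j) := by
  simp only [dotProduct, mulVec, mapC, Matrix.map_apply, Pi.star_apply]
  refine Finset.sum_congr rfl fun i _ => ?_
  rw [Finset.mul_sum]
  refine Finset.sum_congr rfl fun j _ => ?_
  rw [RCLike.star_def]
  ring

lemma posDef_mapC {M : Matrix (Fin n) (Fin n) ℝ} (hM : M.PosDef) : (mapC M).PosDef := by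
  have hsymm : ∀ i j, M j i = M i j := by
    intro i j
    have := congrFun (congrFun hM.isHermitian i) j
    simpa using this
  refine Matrix.PosDef.of_dotProduct_mulVec_pos ?_ ?_
  · ext i j
    simp only [conjTranspose_apply, mapC, Matrix.map_apply, RCLike.star_def,
      Complex.conj_ofReal]
    exact_mod_cast hsymm i j
  · intro x hx
    set a : Fin n → ℝ := fun i => (x i).re with ha
    set b : Fin n → ℝ := fun i => (x i).im with hb
    have hre : (star x ⬝ᵥ (mapC M) *ᵥ x).re = a ⬝ᵥ M *ᵥ a + b ⬝ᵥ M *ᵥ b := by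
      rw [expand_quadC, Complex.re_sum]
      rw [expand_quad, expand_quad, ← Finset.sum_add_distrib]
      refine Finset.sum_congr rfl fun i _ => ?_
      rw [Complex.re_sum, ← Finset.sum_add_distrib]
      refine Finset.sum_congr rfl fun j _ => ?_
      simp only [Complex.mul_re, Complex.mul_im, Complex.ofReal_re, Complex.ofReal_im,
        Complex.conj_re, Complex.conj_im, ha, hb]
      ring
    have him : (star x ⬝ᵥ (mapC M) *ᵥ x).im = 0 := by
      rw [expand_quadC, Complex.im_sum]
      have : ∀ i, (∑ j, (M i j : ℂ) * (starRingEnd ℂ (x i) * x j)).im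
          = ∑ j, M i j * (a i * b j - b i * a j) := by
        intro i
        rw [Complex.im_sum]
        refine Finset.sum_congr rfl fun j _ => ?_
        simp only [Complex.mul_re, Complex.mul_im, Complex.ofReal_re, Complex.ofReal_im,
          Complex.conj_re, Complex.conj_im, ha, hb]
        ring
      rw [Finset.sum_congr rfl fun i _ => this i]
      have split : ∑ i, ∑ j, M i j * (a i * b j - b i * a j)
          = (∑ i, ∑ j, M i j * (a i * b j)) - ∑ i, ∑ j, M i j * (b i * a j) := by
        rw [← Finset.sum_sub_distrib]
        refine Finset.sum_congr rfl fun i _ => ?_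
        rw [← Finset.sum_sub_distrib]
        exact Finset.sum_congr rfl fun j _ => by ring
      rw [split, sub_eq_zero, Finset.sum_comm]
      refine Finset.sum_congr rfl fun j _ => Finset.sum_congr rfl fun i _ => ?_
      rw [hsymm j i]
      ring
    have hab : a ≠ 0 ∨ b ≠ 0 := by
      by_contra hcon
      push_neg at hcon
      apply hx
      funext i
      have h1 := congrFun hcon.1 i
      have h2 := congrFun hcon.2 i
      simp only [ha, hb, Pi.zero_apply] at h1 h2
      exact Complex.ext h1 h2
    have hpos : 0 < a ⬝ᵥ M *ᵥ a + b ⬝ᵥ M *ᵥ b := by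
      have hA := fun (u : Fin n → ℝ) => hM.posSemidef.dotProduct_mulVec_nonneg u
      simp only [star_trivial] at hA
      rcases hab with h | h
      · have := hM.dotProduct_mulVec_pos h
        simp only [star_trivial] at this
        have := hA b
        linarith [hM.dotProduct_mulVec_pos h, hA b]
      · have := hM.dotProduct_mulVec_pos h
        simp only [star_trivial] at this
        linarith [hA a]
    rw [Complex.lt_def]
    constructor
    · simpa [hre] using hpos
    · simp [him]
lemma star_mulVec_mapC (P : Matrix (Fin n) (Fin n) ℝ) (w : Fin n → ℂ) :
    (mapC P) *ᵥ (star w) = star ((mapC P) *ᵥ w) := by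
  funext i
  simp only [mulVec, dotProduct, mapC, Matrix.map_apply, Pi.star_apply, RCLike.star_def]
  rw [map_sum]
  refine Finset.sum_congr rfl fun j _ => ?_
  rw [_root_.map_mul, Complex.conj_ofReal]

lemma hurwitz_of_lyap {A Q S : Matrix (Fin n) (Fin n) ℝ} (hS : S.PosDef) (hQ : Q.PosDef)
    (h : A * S + S * Aᵀ = -Q) : IsHurwitz A := by
  intro μ hμ
  have hdet : ((μ • (1 : Matrix (Fin n) (Fin n) ℂ) - mapC A)).det = 0 :=
    (mem_spectrum_iff_det _ _).mp hμ
  have hdetT : (μ • (1 : Matrix (Fin n) (Fin n) ℂ) - (mapC A)ᵀ).det = 0 := by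
    rw [← Matrix.det_transpose]
    have : (μ • (1 : Matrix (Fin n) (Fin n) ℂ) - (mapC A)ᵀ)ᵀ
        = μ • 1 - mapC A := by
      rw [Matrix.transpose_sub, Matrix.transpose_smul, Matrix.transpose_one,
        Matrix.transpose_transpose]
    rw [this, hdet]
  obtain ⟨w, hw0, hww⟩ := (Matrix.exists_mulVec_eq_zero_iff).mpr hdetT
  have heig : (mapC A)ᵀ *ᵥ w = μ • w := by
    have := hww
    rw [Matrix.sub_mulVec, sub_eq_zero] at this
    rw [← this, Matrix.smul_mulVec, Matrix.one_mulVec]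
  have heig' : (mapC A)ᵀ *ᵥ (star w) = (starRingEnd ℂ μ) • star w := by
    rw [← mapC_transpose, star_mulVec_mapC, mapC_transpose, heig]
    funext i
    simp [Pi.star_apply, Pi.smul_apply, smul_eq_mul]
  set c := star w ⬝ᵥ (mapC S) *ᵥ w with hc
  set e := star w ⬝ᵥ (mapC Q) *ᵥ w with he
  have hcpos : 0 < c := (posDef_mapC hS).dotProduct_mulVec_pos hw0
  have hepos : 0 < e := (posDef_mapC hQ).dotProduct_mulVec_pos hw0
  have hmain : (starRingEnd ℂ μ) * c + μ * c = -e := by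
    have hmap : mapC A * mapC S + mapC S * (mapC A)ᵀ = -(mapC Q) := by
      rw [← mapC_transpose, ← mapC_mul, ← mapC_mul, ← mapC_add, h]
      ext i j; simp [mapC]
    have hterm1 : star w ⬝ᵥ ((mapC A * mapC S) *ᵥ w) = (starRingEnd ℂ μ) * c := by
      rw [← Matrix.mulVec_mulVec, Matrix.dotProduct_mulVec]
      have : star w ᵥ* mapC A = (starRingEnd ℂ μ) • star w := by
        rw [← Matrix.transpose_transpose (mapC A), Matrix.vecMul_transpose]
        exact heig'
      rw [this, smul_dotProduct, hc, smul_eq_mul]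
    have hterm2 : star w ⬝ᵥ ((mapC S * (mapC A)ᵀ) *ᵥ w) = μ * c := by
      rw [← Matrix.mulVec_mulVec, heig, Matrix.mulVec_smul, dotProduct_smul,
        smul_eq_mul, hc]
    calc (starRingEnd ℂ μ) * c + μ * c
        = star w ⬝ᵥ ((mapC A * mapC S + mapC S * (mapC A)ᵀ) *ᵥ w) := by
          rw [Matrix.add_mulVec, dotProduct_add, hterm1, hterm2]
      _ = -e := by rw [hmap, Matrix.neg_mulVec, dotProduct_neg, he]
  have hcre : 0 < c.re ∧ c.im = 0 := by
    have := Complex.lt_def.mp hcpos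
    exact ⟨this.1, this.2.symm⟩
  have hete : 0 < e.re ∧ e.im = 0 := by
    have := Complex.lt_def.mp hepos
    exact ⟨this.1, this.2.symm⟩
  have hre := congrArg Complex.re hmain
  simp only [Complex.add_re, Complex.mul_re, Complex.conj_re, Complex.conj_im,
    Complex.neg_re, hcre.2, hete.2, mul_zero, sub_zero, neg_zero, zero_mul] at hre
  nlinarith [hcre.1, hete.1]

variable {n : ℕ}

noncomputable def L0 (A : Matrix (Fin n) (Fin n) ℝ) :
    Matrix (Fin n) (Fin n) ℝ →ₗ[ℝ] Matrix (Fin n) (Fin n) ℝ :=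
  LinearMap.mulLeft ℝ A + LinearMap.mulRight ℝ Aᵀ

noncomputable def Jlin (A : Matrix (Fin n) (Fin n) ℝ) (θ : ℝ) :
    Matrix (Fin n) (Fin n) ℝ →ₗ[ℝ] Matrix (Fin n) (Fin n) ℝ :=
  (1 - θ) • L0 A - θ • LinearMap.id

lemma Jlin_apply (A : Matrix (Fin n) (Fin n) ℝ) (θ : ℝ) (X : Matrix (Fin n) (Fin n) ℝ) :
    Jlin A θ X = (1 - θ) • (A * X + X * Aᵀ) - θ • X := by
  simp [Jlin, L0, LinearMap.mulLeft_apply, LinearMap.mulRight_apply]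

lemma Jlin_inj {A : Matrix (Fin n) (Fin n) ℝ} (hA : IsHurwitz A) {θ : ℝ}
    (hθ : θ ∈ Set.Icc (0:ℝ) 1) : Function.Injective (Jlin A θ) := by
  have key : ∀ X, Jlin A θ X = 0 → X = 0 := by
    intro X hX
    rw [Jlin_apply] at hX
    rcases eq_or_lt_of_le hθ.2 with h1 | h1
    · subst h1
      rw [sub_self, zero_smul, zero_sub, neg_eq_zero, one_smul] at hX
      exact hX
    · have h1θ : (0:ℝ) < 1 - θ := by linarith
      set c := θ / (2 * (1 - θ)) with hc
      have hc0 : 0 ≤ c := div_nonneg hθ.1 (by linarith)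
      apply lyap_injective hA hc0
      have h2c : (2 * c) = θ / (1 - θ) := by
        rw [hc]; field_simp
      have : A * X + X * Aᵀ = ((1 - θ)⁻¹ * θ) • X := by
        have := congrArg (fun M => (1 - θ)⁻¹ • M) hX
        simp only [smul_sub, smul_smul] at this
        rw [inv_mul_cancel₀ (ne_of_gt h1θ), one_smul, smul_zero, sub_eq_zero] at this
        exact this
      rw [this, h2c, sub_eq_zero]
      congr 1
      field_simp
  intro X Y h
  have : Jlin A θ (X - Y) = 0 := by rw [map_sub, h, sub_self]
  have h0 := key _ this
  rw [sub_eq_zero] at h0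
  exact h0
noncomputable def bMat : Module.Basis (Fin n × Fin n) ℝ (Matrix (Fin n) (Fin n) ℝ) :=
  Matrix.stdBasis ℝ (Fin n) (Fin n)

noncomputable def Jmat (A : Matrix (Fin n) (Fin n) ℝ) (θ : ℝ) :
    Matrix (Fin n × Fin n) (Fin n × Fin n) ℝ :=
  LinearMap.toMatrix bMat bMat (Jlin A θ)

lemma Jmat_isUnit {A : Matrix (Fin n) (Fin n) ℝ} (hA : IsHurwitz A) {θ : ℝ}
    (hθ : θ ∈ Set.Icc (0:ℝ) 1) : IsUnit (Jmat A θ) := by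
  have hbij : Function.Bijective (Jlin A θ) :=
    ⟨Jlin_inj hA hθ, (LinearMap.injective_iff_surjective).mp (Jlin_inj hA hθ)⟩
  set e := LinearEquiv.ofBijective (Jlin A θ) hbij with he
  have hcomp : (Jlin A θ) ∘ₗ (e.symm : Matrix (Fin n) (Fin n) ℝ →ₗ[ℝ] Matrix (Fin n) (Fin n) ℝ)
      = LinearMap.id := by
    ext X
    simp [he]
  have : Jmat A θ * LinearMap.toMatrix bMat bMat
      (e.symm : Matrix (Fin n) (Fin n) ℝ →ₗ[ℝ] Matrix (Fin n) (Fin n) ℝ) = 1 := by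
    rw [Jmat, ← LinearMap.toMatrix_comp, hcomp, LinearMap.toMatrix_id]
  rw [Matrix.isUnit_iff_isUnit_det]
  have hdet := congrArg Matrix.det this
  rw [Matrix.det_mul, Matrix.det_one] at hdet
  exact IsUnit.of_mul_eq_one _ hdet

noncomputable def Rsol (A Q : Matrix (Fin n) (Fin n) ℝ) (θ : ℝ) : Matrix (Fin n) (Fin n) ℝ :=
  Matrix.toLin bMat bMat ((Jmat A θ)⁻¹) (-Q)

lemma Jlin_Rsol {A Q : Matrix (Fin n) (Fin n) ℝ} (hA : IsHurwitz A) {θ : ℝ}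
    (hθ : θ ∈ Set.Icc (0:ℝ) 1) : Jlin A θ (Rsol A Q θ) = -Q := by
  have hu := Jmat_isUnit hA hθ
  have hdet : IsUnit (Jmat A θ).det := (Matrix.isUnit_iff_isUnit_det _).mp hu
  have h1 : Jlin A θ = Matrix.toLin bMat bMat (Jmat A θ) := by
    rw [Jmat, Matrix.toLin_toMatrix]
  rw [h1, Rsol]
  have : (Matrix.toLin bMat bMat (Jmat A θ)) ((Matrix.toLin bMat bMat (Jmat A θ)⁻¹) (-Q))
      = Matrix.toLin bMat bMat (Jmat A θ * (Jmat A θ)⁻¹) (-Q) := by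
    rw [Matrix.toLin_mul bMat bMat bMat]
    rfl
  rw [this, Matrix.mul_nonsing_inv _ hdet, Matrix.toLin_one, LinearMap.id_apply]
lemma Rsol_symm {A Q : Matrix (Fin n) (Fin n) ℝ} (hA : IsHurwitz A) (hQ : Qᵀ = Q) {θ : ℝ}
    (hθ : θ ∈ Set.Icc (0:ℝ) 1) : (Rsol A Q θ)ᵀ = Rsol A Q θ := by
  apply Jlin_inj hA hθ
  have htr : Jlin A θ (Rsol A Q θ)ᵀ = (Jlin A θ (Rsol A Q θ))ᵀ := by
    rw [Jlin_apply, Jlin_apply, Matrix.transpose_sub, Matrix.transpose_smul,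
      Matrix.transpose_smul, Matrix.transpose_add, Matrix.transpose_mul, Matrix.transpose_mul,
      Matrix.transpose_transpose]
    rw [add_comm ((Rsol A Q θ)ᵀ * Aᵀ)]
  rw [htr, Jlin_Rsol hA hθ, Matrix.transpose_neg, hQ]

lemma Rsol_ker {A Q : Matrix (Fin n) (Fin n) ℝ} (hA : IsHurwitz A) (hQ : Q.PosDef) {θ : ℝ}
    (hθ : θ ∈ Set.Icc (0:ℝ) 1) : ∀ v : Fin n → ℝ, Rsol A Q θ *ᵥ v = 0 → v = 0 := by
  intro v hv
  by_contra hv0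
  have hQsym : Qᵀ = Q := by
    have := hQ.isHermitian
    simpa [Matrix.IsHermitian, Matrix.conjTranspose_eq_transpose_of_trivial] using this
  have hRsym : (Rsol A Q θ)ᵀ = Rsol A Q θ := Rsol_symm hA hQsym hθ
  have heq := Jlin_Rsol hA hθ (Q := Q)
  have hdot := congrArg (fun M => v ⬝ᵥ (M *ᵥ v)) heq
  simp only [Jlin_apply] at hdot
  have hvR : v ᵥ* Rsol A Q θ = 0 := by
    rw [← hRsym, Matrix.vecMul_transpose, hv]
  have e1 : (A * Rsol A Q θ) *ᵥ v = 0 := by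
    rw [← Matrix.mulVec_mulVec, hv, Matrix.mulVec_zero]
  have e2 : v ⬝ᵥ ((Rsol A Q θ * Aᵀ) *ᵥ v) = 0 := by
    rw [← Matrix.mulVec_mulVec, Matrix.dotProduct_mulVec, hvR, zero_dotProduct]
  have e3 : v ⬝ᵥ ((θ • Rsol A Q θ) *ᵥ v) = 0 := by
    rw [Matrix.smul_mulVec, hv, smul_zero, dotProduct_zero]
  rw [Matrix.sub_mulVec, Matrix.smul_mulVec, Matrix.add_mulVec, e1, zero_add,
    dotProduct_sub, dotProduct_smul, e2, smul_zero, e3, sub_zero] at hdot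
  have hzero : v ⬝ᵥ (Q *ᵥ v) = 0 := by
    have := hdot.symm
    rw [Matrix.neg_mulVec, dotProduct_neg, neg_eq_zero] at this
    exact this
  have hpos := hQ.dotProduct_mulVec_pos hv0
  simp only [star_trivial] at hpos
  rw [hzero] at hpos
  exact lt_irrefl 0 hpos
lemma continuous_Jmat (A : Matrix (Fin n) (Fin n) ℝ) :
    Continuous fun θ : ℝ => Jmat A θ := by
  have hform : ∀ θ : ℝ, Jmat A θ
      = (1 - θ) • LinearMap.toMatrix bMat bMat (L0 A)
        - θ • LinearMap.toMatrix bMat bMat (LinearMap.id) := by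
    intro θ
    rw [Jmat, Jlin, map_sub, _root_.map_smul, _root_.map_smul]
  simp only [hform]
  exact ((continuous_const.sub continuous_id).smul continuous_const).sub
    (continuous_id.smul continuous_const)

lemma continuous_Rsol_on {A Q : Matrix (Fin n) (Fin n) ℝ} (hA : IsHurwitz A) :
    Continuous fun θ : Set.Icc (0:ℝ) 1 => Rsol A Q θ := by
  have hdet : ∀ θ : Set.Icc (0:ℝ) 1, (Jmat A (θ : ℝ)).det ≠ 0 := by
    intro θ
    have := (Matrix.isUnit_iff_isUnit_det _).mp (Jmat_isUnit hA θ.2)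
    exact IsUnit.ne_zero this
  have hJ : Continuous fun θ : Set.Icc (0:ℝ) 1 => Jmat A (θ : ℝ) :=
    (continuous_Jmat A).comp continuous_subtype_val
  have hinv : Continuous fun θ : Set.Icc (0:ℝ) 1 => (Jmat A (θ : ℝ))⁻¹ := by
    have h1 : Continuous fun θ : Set.Icc (0:ℝ) 1 => ((Jmat A (θ : ℝ)).det)⁻¹ :=
      (hJ.matrix_det).inv₀ hdet
    have h2 : Continuous fun θ : Set.Icc (0:ℝ) 1 => (Jmat A (θ : ℝ)).adjugate :=
      hJ.matrix_adjugate
    have h3 := h1.smul h2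
    have hform : ∀ θ : Set.Icc (0:ℝ) 1, (Jmat A (θ : ℝ))⁻¹
        = ((Jmat A (θ : ℝ)).det)⁻¹ • (Jmat A (θ : ℝ)).adjugate := by
      intro θ
      rw [Matrix.inv_def, Ring.inverse_eq_inv']
    simpa only [hform, Pi.smul_def'] using h3
  have hev : Continuous fun M : Matrix (Fin n × Fin n) (Fin n × Fin n) ℝ =>
      Matrix.toLin bMat bMat M (-Q) := by
    have hlin : IsLinearMap ℝ fun M : Matrix (Fin n × Fin n) (Fin n × Fin n) ℝ =>
        Matrix.toLin bMat bMat M (-Q) := by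
      constructor
      · intro M N; rw [map_add, LinearMap.add_apply]
      · intro c M; rw [_root_.map_smul, LinearMap.smul_apply]
    exact (hlin.mk' _).continuous_of_finiteDimensional
  exact hev.comp hinv
lemma posDef_zero_dim (hn : n = 0) (M : Matrix (Fin n) (Fin n) ℝ) : M.PosDef := by
  subst hn
  refine Matrix.PosDef.of_dotProduct_mulVec_pos ?_ ?_
  · ext i j; exact i.elim0
  · intro x hx
    exfalso
    exact hx (funext fun i => i.elim0)

lemma posDef_of_close (hn : 0 < n) {M : Matrix (Fin n) (Fin n) ℝ} (hM : M.PosDef) :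
    ∃ ε > 0, ∀ N : Matrix (Fin n) (Fin n) ℝ, Nᵀ = N →
      (∑ i, ∑ j, |N i j - M i j|) < ε → N.PosDef := by
  haveI : Nonempty (Fin n) := ⟨⟨0, hn⟩⟩
  set S := Metric.sphere (0 : Fin n → ℝ) 1 with hS
  have hScomp : IsCompact S := isCompact_sphere 0 1
  have hSne : S.Nonempty := NormedSpace.sphere_nonempty.mpr zero_le_one
  have hf : Continuous fun v : Fin n → ℝ => v ⬝ᵥ M *ᵥ v := by
    simp only [dotProduct, mulVec]
    apply continuous_finset_sum
    intro i _
    exact (continuous_apply i).mul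
      (continuous_finset_sum _ fun j _ => continuous_const.mul (continuous_apply j))
  obtain ⟨v₀, hv₀S, hmin⟩ := hScomp.exists_isMinOn hSne hf.continuousOn
  have hv₀ : v₀ ≠ 0 := by
    intro h
    rw [hS] at hv₀S
    rw [mem_sphere_zero_iff_norm] at hv₀S
    rw [h] at hv₀S
    simp at hv₀S
  have hc : 0 < v₀ ⬝ᵥ M *ᵥ v₀ := by
    have := hM.dotProduct_mulVec_pos hv₀
    simpa using this
  refine ⟨v₀ ⬝ᵥ M *ᵥ v₀, hc, fun N hNsym hNclose => ?_⟩
  refine Matrix.PosDef.of_dotProduct_mulVec_pos ?_ ?_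
  · have : Nᴴ = Nᵀ := by
      ext i j; simp [Matrix.conjTranspose_apply]
    rw [Matrix.IsHermitian, this, hNsym]
  · intro x hx
    simp only [star_trivial]
    have hxn : ‖x‖ ≠ 0 := norm_ne_zero_iff.mpr hx
    set u : Fin n → ℝ := ‖x‖⁻¹ • x with hu
    have hun : ‖u‖ = 1 := by
      rw [hu, norm_smul, norm_inv, norm_norm, inv_mul_cancel₀ hxn]
    have huS : u ∈ S := by
      rw [hS, mem_sphere_zero_iff_norm, hun]
    have hub : ∀ i, |u i| ≤ 1 := by
      intro i
      have := norm_le_pi_norm u i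
      rw [Real.norm_eq_abs] at this
      rw [← hun]
      exact this
    have hpert : |u ⬝ᵥ (N - M) *ᵥ u| ≤ ∑ i, ∑ j, |N i j - M i j| := by
      rw [expand_quad]
      calc |∑ i, ∑ j, (N - M) i j * u i * u j|
          ≤ ∑ i, |∑ j, (N - M) i j * u i * u j| := Finset.abs_sum_le_sum_abs _ _
        _ ≤ ∑ i, ∑ j, |(N - M) i j * u i * u j| :=
            Finset.sum_le_sum fun i _ => Finset.abs_sum_le_sum_abs _ _
        _ ≤ ∑ i, ∑ j, |N i j - M i j| := by
            refine Finset.sum_le_sum fun i _ => Finset.sum_le_sum fun j _ => ?_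
            rw [abs_mul, abs_mul]
            have h1 : |(N - M) i j| = |N i j - M i j| := by rw [Matrix.sub_apply]
            calc |(N - M) i j| * |u i| * |u j|
                ≤ |(N - M) i j| * 1 * 1 := by
                  apply mul_le_mul (mul_le_mul le_rfl (hub i) (abs_nonneg _) (abs_nonneg _))
                    (hub j) (abs_nonneg _)
                  positivity
              _ = |N i j - M i j| := by rw [mul_one, mul_one, h1]
    have hsplit : u ⬝ᵥ N *ᵥ u = u ⬝ᵥ M *ᵥ u + u ⬝ᵥ (N - M) *ᵥ u := by
      rw [Matrix.sub_mulVec, dotProduct_sub]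
      ring
    have hmin' : v₀ ⬝ᵥ M *ᵥ v₀ ≤ u ⬝ᵥ M *ᵥ u := hmin huS
    have hupos : 0 < u ⬝ᵥ N *ᵥ u := by
      rw [hsplit]
      have := abs_le.mp hpert
      linarith
    have hxu : x = ‖x‖ • u := by
      rw [hu, smul_smul, mul_inv_cancel₀ hxn, one_smul]
    calc (0:ℝ) < ‖x‖ * (‖x‖ * (u ⬝ᵥ N *ᵥ u)) := by
          have h0 : 0 < ‖x‖ := lt_of_le_of_ne (norm_nonneg x) (Ne.symm hxn)
          positivity
      _ = x ⬝ᵥ N *ᵥ x := by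
          rw [hu, smul_dotProduct, Matrix.mulVec_smul, dotProduct_smul,
            smul_eq_mul, smul_eq_mul]
          field_simp
          
lemma quadform_cont (v : Fin n → ℝ) :
    Continuous fun M : Matrix (Fin n) (Fin n) ℝ => v ⬝ᵥ M *ᵥ v := by
  simp only [dotProduct, mulVec]
  apply continuous_finset_sum
  intro i _
  exact continuous_const.mul (continuous_finset_sum _ fun j _ =>
    by fun_prop)

lemma isHermitian_of_symm {M : Matrix (Fin n) (Fin n) ℝ} (h : Mᵀ = M) : M.IsHermitian := by
  have : Mᴴ = Mᵀ := by ext i j; simp [Matrix.conjTranspose_apply]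
  rw [Matrix.IsHermitian, this, h]

lemma exists_lyap_sol {A Q : Matrix (Fin n) (Fin n) ℝ} (hA : IsHurwitz A) (hQ : Q.PosDef) :
    ∃ P : Matrix (Fin n) (Fin n) ℝ, P.PosDef ∧ A * P + P * Aᵀ = -Q := by
  rcases Nat.eq_zero_or_pos n with hn | hn
  · refine ⟨0, posDef_zero_dim hn 0, ?_⟩
    ext i j
    exact absurd i.2 (by omega)
  have hQsym : Qᵀ = Q := by
    have := hQ.isHermitian
    simpa [Matrix.IsHermitian, Matrix.conjTranspose_eq_transpose_of_trivial] using this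
  haveI : PreconnectedSpace (Set.Icc (0:ℝ) 1) := Subtype.preconnectedSpace isPreconnected_Icc
  set G : Set (Set.Icc (0:ℝ) 1) := {θ | (Rsol A Q (θ:ℝ)).PosDef} with hG
  have hRcont : Continuous fun θ : Set.Icc (0:ℝ) 1 => Rsol A Q (θ:ℝ) := continuous_Rsol_on hA
  have hGclosed : IsClosed G := by
    have hGeq : G = ⋂ v : Fin n → ℝ, {θ : Set.Icc (0:ℝ) 1 | 0 ≤ v ⬝ᵥ (Rsol A Q (θ:ℝ)) *ᵥ v} := by
      ext θ
      simp only [Set.mem_iInter, Set.mem_setOf_eq, hG]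
      constructor
      · intro hθ v
        have := hθ.posSemidef.dotProduct_mulVec_nonneg v
        simpa using this
      · intro hθ
        have hsym := Rsol_symm hA hQsym θ.2
        have hherm := isHermitian_of_symm hsym
        have hsemi : (Rsol A Q (θ:ℝ)).PosSemidef := by
          refine .of_dotProduct_mulVec_nonneg hherm fun x => ?_
          simpa using hθ x
        refine .of_dotProduct_mulVec_pos hherm fun x hx => ?_
        rcases lt_or_eq_of_le (hsemi.dotProduct_mulVec_nonneg x) with h | h
        · simpa using h
        · exfalso
          have h0 : (Rsol A Q (θ:ℝ)) *ᵥ x = 0 :=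
            (hsemi.dotProduct_mulVec_zero_iff x).mp h.symm
          exact hx (Rsol_ker hA hQ θ.2 x h0)
    rw [hGeq]
    exact isClosed_iInter fun v =>
      IsClosed.preimage ((quadform_cont v).comp hRcont) isClosed_Ici
  have hGopen : IsOpen G := by
    rw [isOpen_iff_mem_nhds]
    intro θ₀ hθ₀
    obtain ⟨ε, hε, hkey⟩ := posDef_of_close hn hθ₀
    set g : Set.Icc (0:ℝ) 1 → ℝ :=
      fun θ => ∑ i, ∑ j, |Rsol A Q (θ:ℝ) i j - Rsol A Q (θ₀:ℝ) i j| with hgdef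
    have hgcont : Continuous g := by
      apply continuous_finset_sum
      intro i _
      apply continuous_finset_sum
      intro j _
      have hentry : Continuous fun θ : Set.Icc (0:ℝ) 1 => Rsol A Q (θ:ℝ) i j :=
        (continuous_apply j).comp ((continuous_apply i).comp hRcont)
      exact (hentry.sub continuous_const).abs
    have hg0 : g θ₀ = 0 := by simp [hgdef]
    have hev : ∀ᶠ θ in nhds θ₀, g θ < ε := by
      have ht := hgcont.tendsto θ₀
      rw [hg0] at ht
      exact ht.eventually (gt_mem_nhds hε)
    refine Filter.mem_of_superset hev ?_
    intro θ hθ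
    exact hkey _ (Rsol_symm hA hQsym θ.2) hθ
  have h1mem : (1:ℝ) ∈ Set.Icc (0:ℝ) 1 := by norm_num
  have h1G : (⟨1, h1mem⟩ : Set.Icc (0:ℝ) 1) ∈ G := by
    have heq := Jlin_Rsol hA h1mem (Q := Q) (A := A)
    rw [Jlin_apply] at heq
    simp only [sub_self, zero_smul, zero_sub, one_smul, neg_eq_iff_eq_neg, neg_neg] at heq
    show (Rsol A Q (1:ℝ)).PosDef
    rw [heq]
    exact hQ
  have hGuniv : G = Set.univ := IsClopen.eq_univ ⟨hGclosed, hGopen⟩ ⟨_, h1G⟩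
  have h0mem : (0:ℝ) ∈ Set.Icc (0:ℝ) 1 := by norm_num
  have h0G : (⟨0, h0mem⟩ : Set.Icc (0:ℝ) 1) ∈ G := by
    rw [hGuniv]; trivial
  refine ⟨Rsol A Q 0, h0G, ?_⟩
  have heq := Jlin_Rsol hA h0mem (Q := Q) (A := A)
  rw [Jlin_apply] at heq
  simpa using heq
lemma lyap_of_pair {Sw P S : Matrix (Fin n) (Fin n) ℝ} (hSw : Swᵀ = Sw)
    (hP : P.PosDef) (hS : Sᵀ = -S) :
    (((-(1/2 : ℝ)) • Sw + S) * P⁻¹) * P + P * (((-(1/2 : ℝ)) • Sw + S) * P⁻¹)ᵀ = -Sw := by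
  have hdet : IsUnit P.det := isUnit_iff_ne_zero.mpr (ne_of_gt hP.det_pos)
  have hPsym : Pᵀ = P := by
    have := hP.isHermitian
    simpa [Matrix.IsHermitian, Matrix.conjTranspose_eq_transpose_of_trivial] using this
  have h1 : (((-(1/2 : ℝ)) • Sw + S) * P⁻¹) * P = (-(1/2 : ℝ)) • Sw + S := by
    rw [mul_assoc, Matrix.nonsing_inv_mul _ hdet, mul_one]
  have h2 : P * (((-(1/2 : ℝ)) • Sw + S) * P⁻¹)ᵀ = (-(1/2 : ℝ)) • Sw - S := by
    rw [Matrix.transpose_mul, ← mul_assoc, Matrix.transpose_nonsing_inv, hPsym,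
      Matrix.mul_nonsing_inv _ hdet, one_mul, Matrix.transpose_add, Matrix.transpose_smul,
      hSw, hS]
    rw [sub_eq_add_neg]
  rw [h1, h2]
  module

end LyapAux

open LyapAux in
theorem stmt2 {n : ℕ} (Sw : Matrix (Fin n) (Fin n) ℝ) (hSw : Sw.PosDef) :
    Set.BijOn
      (fun p : Matrix (Fin n) (Fin n) ℝ × Matrix (Fin n) (Fin n) ℝ =>
        ((-(1/2 : ℝ)) • Sw + p.2) * (p.1)⁻¹)
      {p | p.1.PosDef ∧ p.2ᵀ = -p.2}
      {A | IsHurwitz A} := by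
  have hSwsym : Swᵀ = Sw := by
    have := hSw.isHermitian
    simpa [Matrix.IsHermitian, Matrix.conjTranspose_eq_transpose_of_trivial] using this
  have hmaps : ∀ p : Matrix (Fin n) (Fin n) ℝ × Matrix (Fin n) (Fin n) ℝ,
      p ∈ {p : Matrix (Fin n) (Fin n) ℝ × Matrix (Fin n) (Fin n) ℝ | p.1.PosDef ∧ p.2ᵀ = -p.2} →
      IsHurwitz (((-(1/2 : ℝ)) • Sw + p.2) * (p.1)⁻¹) := by
    rintro ⟨P, S⟩ ⟨hP, hS⟩
    exact hurwitz_of_lyap hP hSw (lyap_of_pair hSwsym hP hS)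
  refine ⟨fun p hp => hmaps p hp, ?_, ?_⟩
  · rintro ⟨P₁, S₁⟩ ⟨hP₁, hS₁⟩ ⟨P₂, S₂⟩ ⟨hP₂, hS₂⟩ heq
    simp only at heq
    set A := ((-(1/2 : ℝ)) • Sw + S₁) * P₁⁻¹ with hA
    have hAhur : IsHurwitz A := hmaps ⟨P₁, S₁⟩ ⟨hP₁, hS₁⟩
    have hly1 : A * P₁ + P₁ * Aᵀ = -Sw := lyap_of_pair hSwsym hP₁ hS₁
    have hly2 : A * P₂ + P₂ * Aᵀ = -Sw := by
      rw [heq]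
      exact lyap_of_pair hSwsym hP₂ hS₂
    have hPeq : P₁ = P₂ := by
      have hdiff : A * (P₁ - P₂) + (P₁ - P₂) * Aᵀ - ((2:ℝ) * 0) • (P₁ - P₂) = 0 := by
        rw [Matrix.mul_sub, Matrix.sub_mul]
        have := sub_eq_zero.mpr (hly1.trans hly2.symm)
        rw [mul_zero, zero_smul, sub_zero]
        abel_nf
        abel_nf at this
        convert this using 1
        abel
      have := lyap_injective hAhur le_rfl hdiff
      rwa [sub_eq_zero] at this
    have hSeq : S₁ = S₂ := by
      subst hPeq
      have hdet : IsUnit P₁.det := isUnit_iff_ne_zero.mpr (ne_of_gt hP₁.det_pos)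
      have h2 := congrArg (fun M => M * P₁) heq
      simp only [mul_assoc, Matrix.nonsing_inv_mul _ hdet, mul_one] at h2
      have h1 : A * P₁ = (-(1/2 : ℝ)) • Sw + S₁ := by
        rw [hA, mul_assoc, Matrix.nonsing_inv_mul _ hdet, mul_one]
      exact add_left_cancel (h1.symm.trans h2)
    rw [hPeq, hSeq]
  · rintro A hA
    obtain ⟨P, hP, hlyap⟩ := exists_lyap_sol hA hSw
    have hdet : IsUnit P.det := isUnit_iff_ne_zero.mpr (ne_of_gt hP.det_pos)
    have hPsym : Pᵀ = P := by
      have := hP.isHermitian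
      simpa [Matrix.IsHermitian, Matrix.conjTranspose_eq_transpose_of_trivial] using this
    refine ⟨⟨P, A * P + (1/2 : ℝ) • Sw⟩, ⟨hP, ?_⟩, ?_⟩
    · show (A * P + (1/2 : ℝ) • Sw)ᵀ = -(A * P + (1/2 : ℝ) • Sw)
      rw [Matrix.transpose_add, Matrix.transpose_mul, Matrix.transpose_smul, hSwsym, hPsym]
      have hPA : P * Aᵀ = -Sw - A * P := by
        rw [← hlyap]; abel
      rw [hPA]
      module
    · show ((-(1/2 : ℝ)) • Sw + (A * P + (1/2 : ℝ) • Sw)) * P⁻¹ = A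
      have : (-(1/2 : ℝ)) • Sw + (A * P + (1/2 : ℝ) • Sw) = A * P := by module
      rw [this, mul_assoc, Matrix.mul_nonsing_inv _ hdet, mul_one]
end

section
/- With A, P, M as in the parametrization A = (-(1/2)Σ_w + αS̄)Σ⁻¹, P = -(1/4)(Σ_wΣ⁻¹ + Σ⁻¹Σ_w), M = (1/2)(S̄Σ⁻¹ - Σ⁻¹S̄), the numerical abscissa ω(A) = λ_max((A+Aᵀ)/2) satisfies λ_min(P) + α λ_max(M) ≤ ω(A) ≤ λ_max(P) + α λ_max(M) for all α ≥ 0. -/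
open Matrix

private lemma quad_expand {n : ℕ} {H : Matrix (Fin n) (Fin n) ℝ} (hH : H.IsHermitian)
    (x : EuclideanSpace ℝ (Fin n)) :
    x ⬝ᵥ (H *ᵥ x) = ∑ i, hH.eigenvalues i * (inner ℝ (hH.eigenvectorBasis i) x : ℝ)^2 := by
  have hb : ∀ i, (inner ℝ (hH.eigenvectorBasis i) (WithLp.toLp 2 (H *ᵥ x) : EuclideanSpace ℝ (Fin n)) : ℝ)
      = hH.eigenvalues i * inner ℝ (hH.eigenvectorBasis i) x := by
    intro i
    have h1 : (⇑(hH.eigenvectorBasis i) : Fin n → ℝ) ⬝ᵥ (H *ᵥ x)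
        = (H *ᵥ ⇑(hH.eigenvectorBasis i)) ⬝ᵥ x := by
      rw [dotProduct_mulVec, ← mulVec_transpose]
      congr 1
      rw [show Hᵀ = H from (by simpa using hH : H.IsSymm).eq]
    have h2 := hH.mulVec_eigenvectorBasis i
    simp only [PiLp.inner_apply, RCLike.inner_apply, starRingEnd_apply, star_trivial]
    simp only [mul_comm ((H *ᵥ x.ofLp) _), mul_comm (x.ofLp _)]
    calc ∑ j, (hH.eigenvectorBasis i) j * (H *ᵥ x) j = (⇑(hH.eigenvectorBasis i)) ⬝ᵥ (H *ᵥ x) := rfl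
    _ = (H *ᵥ ⇑(hH.eigenvectorBasis i)) ⬝ᵥ x := h1
    _ = (hH.eigenvalues i • ⇑(hH.eigenvectorBasis i)) ⬝ᵥ x := by rw [h2]
    _ = hH.eigenvalues i * ∑ j, (hH.eigenvectorBasis i) j * x j := by
        simp [smul_dotProduct, dotProduct, Finset.mul_sum, mul_assoc]
  have key := (hH.eigenvectorBasis).sum_inner_mul_inner x (WithLp.toLp 2 (H *ᵥ x) : EuclideanSpace ℝ (Fin n))
  calc x ⬝ᵥ (H *ᵥ x) = (inner ℝ x (WithLp.toLp 2 (H *ᵥ x) : EuclideanSpace ℝ (Fin n)) : ℝ) := by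
        simp [PiLp.inner_apply, RCLike.inner_apply, dotProduct, mul_comm]
  _ = ∑ i, (inner ℝ x (hH.eigenvectorBasis i) : ℝ) * inner ℝ (hH.eigenvectorBasis i) (WithLp.toLp 2 (H *ᵥ x) : EuclideanSpace ℝ (Fin n)) := key.symm
  _ = _ := by
      refine Finset.sum_congr rfl fun i _ => ?_
      rw [hb i, real_inner_comm x]
      ring

private lemma coeff_sum {n : ℕ} {H : Matrix (Fin n) (Fin n) ℝ} (hH : H.IsHermitian)
    (x : EuclideanSpace ℝ (Fin n)) (hx : ‖x‖ = 1) :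
    ∑ i, (inner ℝ (hH.eigenvectorBasis i) x : ℝ)^2 = 1 := by
  have key := (hH.eigenvectorBasis).sum_inner_mul_inner x x
  have h2 : (inner ℝ x x : ℝ) = 1 := by
    rw [real_inner_self_eq_norm_sq, hx]; norm_num
  rw [h2] at key
  rw [← key]
  refine Finset.sum_congr rfl fun i _ => ?_
  rw [real_inner_comm x]; ring

private lemma quad_bounds {n : ℕ} [NeZero n] {H : Matrix (Fin n) (Fin n) ℝ} (hH : H.IsHermitian)
    (x : EuclideanSpace ℝ (Fin n)) (hx : ‖x‖ = 1) :
    (⨅ i, hH.eigenvalues i) ≤ x ⬝ᵥ (H *ᵥ x) ∧ x ⬝ᵥ (H *ᵥ x) ≤ ⨆ i, hH.eigenvalues i := by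
  rw [quad_expand hH x]
  constructor
  · have h1 : (⨅ i, hH.eigenvalues i) = ∑ i, (⨅ j, hH.eigenvalues j) * (inner ℝ (hH.eigenvectorBasis i) x : ℝ)^2 := by
      rw [← Finset.mul_sum, coeff_sum hH x hx, mul_one]
    rw [h1]
    refine Finset.sum_le_sum fun i _ => ?_
    exact mul_le_mul_of_nonneg_right (ciInf_le (Set.finite_range _).bddBelow i) (sq_nonneg _)
  · have h1 : (⨆ i, hH.eigenvalues i) = ∑ i, (⨆ j, hH.eigenvalues j) * (inner ℝ (hH.eigenvectorBasis i) x : ℝ)^2 := by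
      rw [← Finset.mul_sum, coeff_sum hH x hx, mul_one]
    rw [h1]
    refine Finset.sum_le_sum fun i _ => ?_
    exact mul_le_mul_of_nonneg_right (le_ciSup (Set.finite_range _).bddAbove i) (sq_nonneg _)

private lemma exists_unit_quad_eq_sup {n : ℕ} [NeZero n] {H : Matrix (Fin n) (Fin n) ℝ}
    (hH : H.IsHermitian) :
    ∃ x : EuclideanSpace ℝ (Fin n), ‖x‖ = 1 ∧ x ⬝ᵥ (H *ᵥ x) = ⨆ i, hH.eigenvalues i := by
  obtain ⟨i₀, hi₀⟩ : ∃ i₀, (⨆ i, hH.eigenvalues i) = hH.eigenvalues i₀ := by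
    obtain ⟨i₀, hmax⟩ := Finite.exists_max hH.eigenvalues
    exact ⟨i₀, le_antisymm (ciSup_le hmax) (le_ciSup (Set.finite_range _).bddAbove i₀)⟩
  refine ⟨hH.eigenvectorBasis i₀, hH.eigenvectorBasis.orthonormal.1 i₀, ?_⟩
  have := hH.eigenvalues_eq i₀
  rw [hi₀, this]
  simp only [RCLike.re_to_real, star_trivial]

theorem stmt9 {n : ℕ} (Sw Sig Sb : Matrix (Fin n) (Fin n) ℝ) (α : ℝ) (hα : 0 ≤ α)
    (hSw : Sw.PosDef) (hSig : Sig.PosDef) (hSb : Sbᵀ = -Sb) (hSb0 : Sb ≠ 0)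
    (A P M : Matrix (Fin n) (Fin n) ℝ)
    (hA : A = ((-(1/2 : ℝ)) • Sw + α • Sb) * Sig⁻¹)
    (hP : P = (-(1/4 : ℝ)) • (Sw * Sig⁻¹ + Sig⁻¹ * Sw))
    (hM : M = (1/2 : ℝ) • (Sb * Sig⁻¹ - Sig⁻¹ * Sb))
    (hHA : ((1/2 : ℝ) • (A + Aᵀ)).IsHermitian)
    (hHP : P.IsHermitian) (hHM : M.IsHermitian) :
    (⨅ i, hHP.eigenvalues i) + α * (⨆ i, hHM.eigenvalues i) ≤ (⨆ i, hHA.eigenvalues i) ∧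
    (⨆ i, hHA.eigenvalues i) ≤ (⨆ i, hHP.eigenvalues i) + α * (⨆ i, hHM.eigenvalues i) := by
  rcases Nat.eq_zero_or_pos n with hn | hn
  · exfalso; apply hSb0; subst hn; ext i j; exact i.elim0
  haveI : NeZero n := ⟨hn.ne'⟩
  -- key matrix identity
  have hSwT : Swᵀ = Sw := (by simpa using hSw.isHermitian : Sw.IsSymm).eq
  have hSigT : (Sig⁻¹)ᵀ = Sig⁻¹ := by
    rw [transpose_nonsing_inv]
    congr 1
    exact (by simpa using hSig.isHermitian : Sig.IsSymm).eq
  have E : (1/2 : ℝ) • (A + Aᵀ) = P + α • M := by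
    subst hA hP hM
    simp only [transpose_mul, transpose_add, transpose_smul, hSwT, hSigT, hSb, smul_neg,
      Matrix.add_mul, Matrix.mul_add, Matrix.mul_neg, Matrix.neg_mul, Matrix.smul_mul,
      Matrix.mul_smul]
    module
  -- quadratic form splitting
  have split : ∀ x : EuclideanSpace ℝ (Fin n),
      x ⬝ᵥ (((1/2 : ℝ) • (A + Aᵀ)) *ᵥ x) = x ⬝ᵥ (P *ᵥ x) + α * (x ⬝ᵥ (M *ᵥ x)) := by
    intro x
    rw [E, add_mulVec, smul_mulVec, dotProduct_add, dotProduct_smul]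
    rfl
  constructor
  · obtain ⟨x, hx1, hxe⟩ := exists_unit_quad_eq_sup hHM
    have hb := quad_bounds hHP x hx1
    have hbA := (quad_bounds hHA x hx1).2
    rw [split x, hxe] at hbA
    have : (⨅ i, hHP.eigenvalues i) + α * (⨆ i, hHM.eigenvalues i)
        ≤ x ⬝ᵥ (P *ᵥ x) + α * (⨆ i, hHM.eigenvalues i) := by linarith [hb.1]
    exact this.trans hbA
  · obtain ⟨x, hx1, hxe⟩ := exists_unit_quad_eq_sup hHA
    rw [← hxe, split x]
    have hbP := (quad_bounds hHP x hx1).2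
    have hbM := (quad_bounds hHM x hx1).2
    have := mul_le_mul_of_nonneg_left hbM hα
    linarith
end

section
/- With F(0, α) = (1/4)Σ⁻¹Σ_wΣ⁻¹ + α²Σ⁻¹S̄ᵀΣ_w⁻¹S̄Σ⁻¹, where Σ_w, Σ are symmetric positive definite and S̄ is skew-symmetric nonzero: for every α > 0, F(0,α) ⪰ F(0,0) ≻ 0 and trace(F(0,α)) > trace(F(0,0)), and consequently trace(F(0,0)⁻¹) > trace(F(0,α)⁻¹). -/
open Matrix

section helpers

variable {n : ℕ}

private lemma quad_conj (M N : Matrix (Fin n) (Fin n) ℝ) (x : Fin n → ℝ) :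
    x ⬝ᵥ (Nᵀ * M * N) *ᵥ x = (N *ᵥ x) ⬝ᵥ M *ᵥ (N *ᵥ x) := by
  rw [← mulVec_mulVec, ← mulVec_mulVec, dotProduct_mulVec x Nᵀ, vecMul_transpose]

private lemma herm_transpose {M : Matrix (Fin n) (Fin n) ℝ} (h : M.IsHermitian) : Mᵀ = M := by
  rw [← conjTranspose_eq_transpose_of_trivial]; exact h

private lemma psd_smul' {c : ℝ} (hc : 0 ≤ c) {M : Matrix (Fin n) (Fin n) ℝ}
    (hM : M.PosSemidef) : (c • M).PosSemidef := by
  refine PosSemidef.of_dotProduct_mulVec_nonneg ?_ fun x => ?_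
  · unfold Matrix.IsHermitian
    rw [conjTranspose_smul, hM.1]
    simp
  · rw [smul_mulVec, dotProduct_smul, smul_eq_mul]
    exact mul_nonneg hc (hM.dotProduct_mulVec_nonneg x)

private lemma pd_smul' {c : ℝ} (hc : 0 < c) {M : Matrix (Fin n) (Fin n) ℝ}
    (hM : M.PosDef) : (c • M).PosDef := by
  refine PosDef.of_dotProduct_mulVec_pos ?_ fun x hx => ?_
  · unfold Matrix.IsHermitian
    rw [conjTranspose_smul, hM.1]
    simp
  · rw [smul_mulVec, dotProduct_smul, smul_eq_mul]
    exact mul_pos hc (hM.dotProduct_mulVec_pos hx)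

private lemma pd_conj {M N : Matrix (Fin n) (Fin n) ℝ} (hM : M.PosDef) (hN : IsUnit N) :
    (Nᵀ * M * N).PosDef := by
  refine PosDef.of_dotProduct_mulVec_pos ?_ fun x hx => ?_
  · have := isHermitian_conjTranspose_mul_mul N hM.1
    rwa [conjTranspose_eq_transpose_of_trivial] at this
  · have hx' : N *ᵥ x ≠ 0 := by
      intro h
      exact hx (mulVec_injective_iff_isUnit.mpr hN (by simpa using h))
    have := hM.dotProduct_mulVec_pos hx'
    simpa [quad_conj] using this

private lemma psd_conj {M : Matrix (Fin n) (Fin n) ℝ} (hM : M.PosSemidef)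
    (N : Matrix (Fin n) (Fin n) ℝ) : (Nᵀ * M * N).PosSemidef := by
  have := hM.conjTranspose_mul_mul_same N
  rwa [conjTranspose_eq_transpose_of_trivial] at this

private lemma psd_trace_nonneg {M : Matrix (Fin n) (Fin n) ℝ}
    (hM : M.PosSemidef) : 0 ≤ M.trace := by
  obtain ⟨L, rfl⟩ : ∃ L : Matrix (Fin n) (Fin n) ℝ, M = Lᴴ * L := by
    open scoped MatrixOrder in exact CStarAlgebra.nonneg_iff_eq_star_mul_self.mp hM.nonneg
  have h : (Lᴴ * L).trace = ∑ i, ∑ j, (L j i) ^ 2 := by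
    simp [Matrix.trace, Matrix.diag, Matrix.mul_apply, Matrix.conjTranspose_apply, sq]
  rw [h]
  exact Finset.sum_nonneg fun i _ => Finset.sum_nonneg fun j _ => sq_nonneg _

private lemma psd_trace_pos {M : Matrix (Fin n) (Fin n) ℝ}
    (hM : M.PosSemidef) (h0 : M ≠ 0) : 0 < M.trace := by
  obtain ⟨L, rfl⟩ : ∃ L : Matrix (Fin n) (Fin n) ℝ, M = Lᴴ * L := by
    open scoped MatrixOrder in exact CStarAlgebra.nonneg_iff_eq_star_mul_self.mp hM.nonneg
  have hL : L ≠ 0 := by rintro rfl; simp at h0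
  obtain ⟨j, i, hji⟩ : ∃ j i, L j i ≠ 0 := by
    by_contra h
    push_neg at h
    exact hL (Matrix.ext fun j i => by simpa using h j i)
  have h : (Lᴴ * L).trace = ∑ i, ∑ j, (L j i) ^ 2 := by
    simp [Matrix.trace, Matrix.diag, Matrix.mul_apply, Matrix.conjTranspose_apply, sq]
  rw [h]
  refine Finset.sum_pos' (fun i _ => Finset.sum_nonneg fun j _ => sq_nonneg _)
    ⟨i, Finset.mem_univ _, Finset.sum_pos' (fun j _ => sq_nonneg _)
      ⟨j, Finset.mem_univ _, by positivity⟩⟩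

end helpers

theorem stmt18 {n : ℕ} (Sw Sig Sb : Matrix (Fin n) (Fin n) ℝ)
    (hSw : Sw.PosDef) (hSig : Sig.PosDef) (hSb : Sbᵀ = -Sb) (hSb0 : Sb ≠ 0)
    (F : ℝ → Matrix (Fin n) (Fin n) ℝ)
    (hF : ∀ α, F α = (1/4 : ℝ) • (Sig⁻¹ * Sw * Sig⁻¹) +
      (α^2) • (Sig⁻¹ * Sbᵀ * Sw⁻¹ * Sb * Sig⁻¹))
    (α : ℝ) (hα : 0 < α) :
    (F α - F 0).PosSemidef ∧ (F 0).PosDef ∧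
    (F 0).trace < (F α).trace ∧
    ((F α)⁻¹).trace < ((F 0)⁻¹).trace := by
  have hSwi : Sw⁻¹.PosDef := hSw.inv
  have hSigi : Sig⁻¹.PosDef := hSig.inv
  have hSigiU : IsUnit Sig⁻¹ := hSigi.isUnit
  have hSigiT : (Sig⁻¹)ᵀ = Sig⁻¹ := herm_transpose hSigi.isHermitian
  set P : Matrix (Fin n) (Fin n) ℝ := Sig⁻¹ * Sbᵀ * Sw⁻¹ * Sb * Sig⁻¹ with hPdef
  have hPfact : P = (Sb * Sig⁻¹)ᵀ * Sw⁻¹ * (Sb * Sig⁻¹) := by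
    rw [transpose_mul, hSigiT]
    simp [hPdef, Matrix.mul_assoc]
  have hPpsd : P.PosSemidef := hPfact ▸ psd_conj hSwi.posSemidef (Sb * Sig⁻¹)
  -- P ≠ 0
  have hPne : P ≠ 0 := by
    obtain ⟨i0, j0, hij⟩ : ∃ i j, Sb i j ≠ 0 := by
      by_contra h
      push_neg at h
      exact hSb0 (Matrix.ext fun i j => by simpa using h i j)
    intro hP0
    set x : Fin n → ℝ := Pi.single j0 1 with hx
    have hbx : Sb *ᵥ x ≠ 0 := by
      intro h
      have := congrFun h i0
      simp [hx] at this
      exact hij this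
    set y : Fin n → ℝ := Sig *ᵥ x with hy
    have hxy : Sig⁻¹ *ᵥ y = x := by
      rw [hy, mulVec_mulVec, Matrix.nonsing_inv_mul Sig
        ((Matrix.isUnit_iff_isUnit_det Sig).mp hSig.isUnit), one_mulVec]
    have hq : y ⬝ᵥ P *ᵥ y = (Sb *ᵥ x) ⬝ᵥ Sw⁻¹ *ᵥ (Sb *ᵥ x) := by
      rw [hPfact, quad_conj, ← mulVec_mulVec, hxy]
    have hpos : 0 < y ⬝ᵥ P *ᵥ y := by
      rw [hq]
      simpa using hSwi.dotProduct_mulVec_pos hbx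
    rw [hP0] at hpos
    simp at hpos
  have hPtr : 0 < P.trace := psd_trace_pos hPpsd hPne
  -- basic shapes
  have hF0 : F 0 = (1/4 : ℝ) • (Sig⁻¹ * Sw * Sig⁻¹) := by
    rw [hF 0]; norm_num
  have hFα : F α = F 0 + (α ^ 2) • P := by rw [hF α, hF0]
  have hA : (F 0).PosDef := by
    rw [hF0]
    refine pd_smul' (by norm_num) ?_
    have := pd_conj hSw hSigiU
    rwa [hSigiT] at this
  set B : Matrix (Fin n) (Fin n) ℝ := (α ^ 2) • P with hBdef
  have hBpsd : B.PosSemidef := psd_smul' (sq_nonneg α) hPpsd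
  have hsub : F α - F 0 = B := by rw [hFα]; exact add_sub_cancel_left _ _
  have hC : (F α).PosDef := by rw [hFα]; exact hA.add_posSemidef hBpsd
  have hBne : B ≠ 0 := by
    rw [hBdef]
    intro h
    have : (α ^ 2) • P.trace = 0 := by
      rw [← trace_smul, h, trace_zero]
    have hα2 : (0:ℝ) < α ^ 2 := by positivity
    simp [smul_eq_mul, hα2.ne', hPtr.ne'] at this
  have hBsym : Bᵀ = B := herm_transpose hBpsd.isHermitian
  -- traces
  refine ⟨hsub ▸ hBpsd, hA, ?_, ?_⟩
  · rw [hFα, trace_add, trace_smul, smul_eq_mul]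
    have : (0:ℝ) < α ^ 2 * P.trace := by positivity
    linarith
  · -- inverse traces
    set A := F 0
    set C := F α
    have hAU : IsUnit A.det := hA.det_pos.ne'.isUnit
    have hCU : IsUnit C.det := hC.det_pos.ne'.isUnit
    have hCAB : C = A + B := hFα
    have key : A⁻¹ = C⁻¹ + A⁻¹ * B * C⁻¹ := by
      calc A⁻¹ = A⁻¹ * (C * C⁻¹) := by rw [Matrix.mul_nonsing_inv _ hCU, Matrix.mul_one]
      _ = A⁻¹ * ((A + B) * C⁻¹) := by rw [← hCAB]
      _ = (A⁻¹ * A) * C⁻¹ + A⁻¹ * B * C⁻¹ := by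
          noncomm_ring
      _ = C⁻¹ + A⁻¹ * B * C⁻¹ := by
          rw [Matrix.nonsing_inv_mul _ hAU, Matrix.one_mul]
    have hCiT : (C⁻¹)ᵀ = C⁻¹ := herm_transpose hC.inv.isHermitian
    have hT : (B * C⁻¹)ᵀ = C⁻¹ * B := by rw [transpose_mul, hBsym, hCiT]
    have key' : A⁻¹ = C⁻¹ + C⁻¹ * B * A⁻¹ := by
      calc A⁻¹ = (C⁻¹ * C) * A⁻¹ := by rw [Matrix.nonsing_inv_mul _ hCU, Matrix.one_mul]
      _ = C⁻¹ * ((A + B) * A⁻¹) := by rw [← hCAB, Matrix.mul_assoc]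
      _ = C⁻¹ * (A * A⁻¹) + C⁻¹ * B * A⁻¹ := by noncomm_ring
      _ = C⁻¹ + C⁻¹ * B * A⁻¹ := by rw [Matrix.mul_nonsing_inv _ hAU, Matrix.mul_one]
    have key2 : A⁻¹ = C⁻¹ + C⁻¹ * B * C⁻¹ + (B * C⁻¹)ᵀ * A⁻¹ * (B * C⁻¹) := by
      calc A⁻¹ = C⁻¹ + A⁻¹ * B * C⁻¹ := key
      _ = C⁻¹ + (C⁻¹ + C⁻¹ * B * A⁻¹) * B * C⁻¹ := by rw [← key']
      _ = C⁻¹ + C⁻¹ * B * C⁻¹ + (B * C⁻¹)ᵀ * A⁻¹ * (B * C⁻¹) := by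
          rw [hT]; noncomm_ring
    have hmid : (C⁻¹ * B * C⁻¹).PosSemidef := by
      have := psd_conj hBpsd C⁻¹
      rwa [hCiT] at this
    have hmidne : C⁻¹ * B * C⁻¹ ≠ 0 := by
      intro h
      apply hBne
      have h1 : C * (C⁻¹ * B * C⁻¹) * C = B := by
        rw [Matrix.mul_assoc C⁻¹ B C⁻¹, ← Matrix.mul_assoc C C⁻¹,
          Matrix.mul_nonsing_inv _ hCU, Matrix.one_mul, Matrix.mul_assoc,
          Matrix.nonsing_inv_mul _ hCU, Matrix.mul_one]
      rw [h] at h1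
      simpa using h1.symm
    have htr1 : 0 < (C⁻¹ * B * C⁻¹).trace := psd_trace_pos hmid hmidne
    have htr2 : 0 ≤ ((B * C⁻¹)ᵀ * A⁻¹ * (B * C⁻¹)).trace :=
      psd_trace_nonneg (psd_conj hA.inv.posSemidef (B * C⁻¹))
    have := congrArg Matrix.trace key2
    rw [trace_add, trace_add] at this
    rw [this]
    linarith
end
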